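/- Suppose R₀ = (Λλ/(μσ))·φ'(0) > 1. Then there exists a unique pair (u*, v*) with u* > 0 and v* > 0 satisfying Λ - μu* - λu*φ(v*) = 0 and λu*φ(v*) - σv* = 0; moreover v* ∈ (0, Λ/σ₀) where σ₀ = min(σ, μ), and u* = σv*/(λφ(v*)). -/

import Mathlib

open Set Filter Topology

set_option maxHeartbeats 2000000 in
theorem stmt_3 (φ : ℝ → ℝ) (Λ μ σ lam : ℝ)
    (hΛ : 0 < Λ) (hμ : 0 < μ) (hσ : 0 < σ) (hlam : 0 < lam)
    (hdiff : ∀ v ∈ Set.Ici (0:ℝ), DifferentiableAt ℝ φ v)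
    (hφ0 : φ 0 = 0)
    (hinc : ∀ v : ℝ, 0 < v → 0 < v * deriv φ v ∧ v * deriv φ v ≤ φ v)
    (hR0 : 1 < Λ * lam / (μ * σ) * deriv φ 0) :
    ∃ u v : ℝ, 0 < u ∧ 0 < v ∧
      Λ - μ * u - lam * u * φ v = 0 ∧ lam * u * φ v - σ * v = 0 ∧
      v < Λ / min σ μ ∧ u = σ * v / (lam * φ v) ∧
      (∀ u' v' : ℝ, 0 < u' → 0 < v' →
        Λ - μ * u' - lam * u' * φ v' = 0 → lam * u' * φ v' - σ * v' = 0 →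
        u' = u ∧ v' = v) := by
  have hφ' : ∀ v : ℝ, 0 < v → 0 < deriv φ v := by
    intro v hv
    nlinarith [(hinc v hv).1]
  have hcont : ContinuousOn φ (Set.Ici 0) :=
    fun x hx => (hdiff x hx).continuousAt.continuousWithinAt
  have hmono : StrictMonoOn φ (Set.Ici 0) := by
    apply strictMonoOn_of_deriv_pos (convex_Ici 0) hcont
    intro x hx
    rw [interior_Ici] at hx
    exact hφ' x hx
  have hφpos : ∀ v : ℝ, 0 < v → 0 < φ v := by
    intro v hv
    have := hmono Set.self_mem_Ici (Set.mem_Ici.mpr hv.le) hv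
    simpa [hφ0] using this
  have hanti : AntitoneOn (fun v => φ v / v) (Set.Ioi 0) := by
    apply antitoneOn_of_deriv_nonpos (convex_Ioi 0)
    · exact fun x hx =>
        ((hdiff x (Set.mem_Ici.mpr (le_of_lt (Set.mem_Ioi.mp hx)))).continuousAt.div continuousAt_id
          (ne_of_gt (Set.mem_Ioi.mp hx))).continuousWithinAt
    · intro x hx
      rw [interior_Ioi] at hx
      exact ((hdiff x (Set.mem_Ici.mpr (Set.mem_Ioi.mp hx).le)).div differentiableAt_id (ne_of_gt (Set.mem_Ioi.mp hx))).differentiableWithinAt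
    · intro x hx
      rw [interior_Ioi] at hx
      rw [deriv_fun_div (hdiff x (Set.mem_Ici.mpr (Set.mem_Ioi.mp hx).le)) differentiableAt_fun_id (ne_of_gt (Set.mem_Ioi.mp hx))]
      have h1 := (hinc x hx).2
      have hx2 : (0:ℝ) < x ^ 2 := pow_pos hx 2
      apply div_nonpos_of_nonpos_of_nonneg _ hx2.le
      simp only [deriv_id'']
      nlinarith
  -- key inequality from R₀ > 1
  have key : μ * σ < Λ * lam * deriv φ 0 := by
    have h : Λ * lam / (μ * σ) * deriv φ 0 = Λ * lam * deriv φ 0 / (μ * σ) := by ring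
    rw [h, lt_div_iff₀ (by positivity)] at hR0
    linarith
  -- slope limit
  have hd0 : HasDerivAt φ (deriv φ 0) 0 := (hdiff 0 Set.self_mem_Ici).hasDerivAt
  have hslope : Tendsto (fun v => φ v / v) (𝓝[>] (0:ℝ)) (𝓝 (deriv φ 0)) := by
    have h := hasDerivAt_iff_tendsto_slope.mp hd0
    have h2 : Tendsto (slope φ 0) (𝓝[>] (0:ℝ)) (𝓝 (deriv φ 0)) :=
      h.mono_left (nhdsWithin_mono _ (fun x hx => ne_of_gt hx))
    refine h2.congr (fun x => ?_)
    rw [slope_def_field]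
    rw [hφ0]
    ring
  have hG : Tendsto (fun v => lam * (φ v / v) * (Λ - σ * v)) (𝓝[>] (0:ℝ))
      (𝓝 (lam * deriv φ 0 * Λ)) := by
    have h1 : Tendsto (fun v : ℝ => Λ - σ * v) (𝓝[>] (0:ℝ)) (𝓝 Λ) := by
      have : Tendsto (fun v : ℝ => Λ - σ * v) (𝓝 (0:ℝ)) (𝓝 (Λ - σ * 0)) := by
        exact (tendsto_const_nhds.sub (tendsto_const_nhds.mul tendsto_id))
      simpa using this.mono_left nhdsWithin_le_nhds
    exact (tendsto_const_nhds.mul hslope).mul h1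
  have hev1 : ∀ᶠ v in 𝓝[>] (0:ℝ), μ * σ < lam * (φ v / v) * (Λ - σ * v) := by
    apply hG.eventually_const_lt
    nlinarith
  have hev2 : ∀ᶠ v in 𝓝[>] (0:ℝ), v ∈ Set.Ioo 0 (Λ / σ) := by
    exact Ioo_mem_nhdsGT_of_mem ⟨le_refl 0, by positivity⟩
  obtain ⟨v₀, hv₀G, hv₀1, hv₀2⟩ : ∃ v₀ : ℝ, (μ * σ < lam * (φ v₀ / v₀) * (Λ - σ * v₀)) ∧
      0 < v₀ ∧ v₀ < Λ / σ := by
    obtain ⟨v₀, h1, h2⟩ := (hev1.and hev2).exists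
    exact ⟨v₀, h1, h2.1, h2.2⟩
  -- the one-variable function H
  set H : ℝ → ℝ := fun v => lam * φ v * (Λ - σ * v) - μ * σ * v with hH
  have hHv₀ : 0 < H v₀ := by
    have h : lam * (φ v₀ / v₀) * (Λ - σ * v₀) * v₀ = lam * φ v₀ * (Λ - σ * v₀) := by
      field_simp
    simp only [hH]
    nlinarith [mul_lt_mul_of_pos_right hv₀G hv₀1]
  have hHb : H (Λ / σ) = -(μ * Λ) := by
    simp only [hH]
    field_simp
    ring
  have hHcont : ContinuousOn H (Set.Icc v₀ (Λ / σ)) := by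
    intro x hx
    have hx0 : (0:ℝ) ≤ x := le_trans hv₀1.le hx.1
    exact (((continuousAt_const.mul (hdiff x hx0).continuousAt).mul
      (continuousAt_const.sub (continuousAt_const.mul continuousAt_id))).sub
      (continuousAt_const.mul continuousAt_id)).continuousWithinAt
  have hivt : ∃ vs ∈ Set.Ioo v₀ (Λ / σ), H vs = 0 := by
    have hmem : (0:ℝ) ∈ Set.Ioo (H (Λ / σ)) (H v₀) := by
      constructor
      · rw [hHb]; nlinarith
      · exact hHv₀
    obtain ⟨vs, hvs, hvs0⟩ := intermediate_value_Ioo' hv₀2.le hHcont hmem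
    exact ⟨vs, hvs, hvs0⟩
  obtain ⟨vs, hvs, hHvs⟩ := hivt
  have hvs0 : 0 < vs := lt_trans hv₀1 hvs.1
  have hvsb : vs < Λ / σ := hvs.2
  have hφvs : 0 < φ vs := hφpos vs hvs0
  have hΛσ : 0 < Λ - σ * vs := by
    have := (lt_div_iff₀ hσ).mp hvsb
    nlinarith
  have hHvs' : lam * φ vs * (Λ - σ * vs) = μ * σ * vs := by
    simp only [hH] at hHvs; linarith
  set us : ℝ := σ * vs / (lam * φ vs) with hus
  have hus0 : 0 < us := by positivity
  have hne : lam * φ vs ≠ 0 := by positivity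
  have heq2 : lam * us * φ vs - σ * vs = 0 := by
    rw [hus]; field_simp; ring
  have hμus : μ * us = Λ - σ * vs := by
    rw [hus, mul_div_assoc', div_eq_iff hne]
    linear_combination (-1 : ℝ) * hHvs'
  have heq1 : Λ - μ * us - lam * us * φ vs = 0 := by
    have h : lam * us * φ vs = σ * vs := by linarith
    rw [h]; linarith
  -- strict antitonicity of g on (0, Λ/σ)
  have hg : ∀ a b : ℝ, 0 < a → a < b → b < Λ / σ →
      lam * (φ b / b) * (Λ - σ * b) < lam * (φ a / a) * (Λ - σ * a) := by
    intro a b ha hab hb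
    have hb0 : 0 < b := lt_trans ha hab
    have h1 : φ b / b ≤ φ a / a := hanti (Set.mem_Ioi.mpr ha) (Set.mem_Ioi.mpr hb0) hab.le
    have h3 : 0 < Λ - σ * b := by
      have := (lt_div_iff₀ hσ).mp hb
      nlinarith
    have h4 : 0 < φ b / b := div_pos (hφpos b hb0) hb0
    have h5 : 0 < φ a / a := div_pos (hφpos a ha) ha
    have hlt : Λ - σ * b < Λ - σ * a := by nlinarith
    have step1 : (φ b / b) * (Λ - σ * b) ≤ (φ a / a) * (Λ - σ * b) :=
      mul_le_mul_of_nonneg_right h1 h3.le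
    have step2 : (φ a / a) * (Λ - σ * b) < (φ a / a) * (Λ - σ * a) :=
      mul_lt_mul_of_pos_left hlt h5
    have hlt2 := lt_of_le_of_lt step1 step2
    calc lam * (φ b / b) * (Λ - σ * b) = lam * ((φ b / b) * (Λ - σ * b)) := by ring
      _ < lam * ((φ a / a) * (Λ - σ * a)) := mul_lt_mul_of_pos_left hlt2 hlam
      _ = lam * (φ a / a) * (Λ - σ * a) := by ring
  have hgval : ∀ v : ℝ, 0 < v → v < Λ / σ → H v = 0 →
      lam * (φ v / v) * (Λ - σ * v) = μ * σ := by
    intro v hv hvb hHv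
    have hHv' : lam * φ v * (Λ - σ * v) = μ * σ * v := by
      simp only [hH] at hHv; linarith
    have hv' : v ≠ 0 := ne_of_gt hv
    calc lam * (φ v / v) * (Λ - σ * v) = lam * φ v * (Λ - σ * v) / v := by ring
      _ = μ * σ * v / v := by rw [hHv']
      _ = μ * σ := by field_simp
  refine ⟨us, vs, hus0, hvs0, heq1, heq2, ?_, rfl, ?_⟩
  · calc vs < Λ / σ := hvsb
      _ ≤ Λ / min σ μ := by
        apply div_le_div_of_nonneg_left hΛ.le (lt_min hσ hμ) (min_le_left _ _)
  · intro u' v' hu' hv' he1 he2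
    have hφv' : 0 < φ v' := hφpos v' hv'
    have hu'eq : u' = σ * v' / (lam * φ v') := by
      have hne : lam * φ v' ≠ 0 := by positivity
      field_simp
      linarith
    have hv'b : v' < Λ / σ := by
      rw [lt_div_iff₀ hσ]
      have := mul_pos hμ hu'
      linarith
    have hHv' : H v' = 0 := by
      simp only [hH]
      have h : Λ - σ * v' = μ * u' := by linarith
      have h2 : lam * u' * φ v' = σ * v' := by linarith
      rw [h]
      linear_combination μ * h2
    have hvv : v' = vs := by
      have g1 := hgval v' hv' hv'b hHv'
      have g2 := hgval vs hvs0 hvsb hHvs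
      rcases lt_trichotomy v' vs with h | h | h
      · exact absurd (g2.trans g1.symm) (ne_of_lt (hg v' vs hv' h hvsb))
      · exact h
      · exact absurd (g1.trans g2.symm) (ne_of_lt (hg vs v' hvs0 h hv'b))
    constructor
    · rw [hu'eq, hvv, hus]
    · exact hvv
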